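/- Let f₀, f₁ ∈ PL₀(I) satisfy the relations [f₀f₁⁻¹, f₀⁻¹f₁f₀] = 1 and [f₀f₁⁻¹, f₀⁻²f₁f₀²] = 1. If A is an orbital of f₀, then either A contains some orbital B of f₁ with B ⊆ A, or A is disjoint from the support of f₁. In particular no orbital of f₀ is properly contained in an orbital of f₁. -/

import Mathlib

/-- The support of a permutation `f` of `ℝ` : the set of points moved by `f`. -/
def Supp (f : Equiv.Perm ℝ) : Set ℝ := {x : ℝ | f x ≠ x}

/-- `IsPL0 f` says that `f` is (the extension by the identity on `ℝ \ [0,1]` of) a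
piecewise-linear orientation-preserving homeomorphism of the unit interval `[0,1]`
with only finitely many breakpoints; this represents membership in `PL₀(I)`.
The finite set `B` collects the possible points of non-differentiability: away from
`B` the map is locally affine. -/
def IsPL0 (f : Equiv.Perm ℝ) : Prop :=
  StrictMono ⇑f ∧ (∀ x : ℝ, x ≤ 0 → f x = x) ∧ (∀ x : ℝ, 1 ≤ x → f x = x) ∧
    ∃ B : Finset ℝ, ∀ x : ℝ, x ∉ B → ∃ s t : ℝ, ∀ᶠ y in nhds x, f y = s * y + t

/-- `IsOrbital f a b` : the open interval `(a,b)` is an orbital of `f`, i.e. a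
connected component of `Supp f` (an open interval contained in the support whose
endpoints are fixed by `f`). -/
def IsOrbital (f : Equiv.Perm ℝ) (a b : ℝ) : Prop :=
  a < b ∧ Set.Ioo a b ⊆ Supp f ∧ f a = a ∧ f b = b

open scoped commutatorElement

/-- The two defining relations `[f₀f₁⁻¹, f₁^{f₀}] = 1` and `[f₀f₁⁻¹, f₁^{f₀²}] = 1`
of Thompson's group `F`, for the pair `(f₀, f₁)`.  The paper composes in word order
(functions act on the right), so the paper's word `f₀f₁⁻¹` is the group element
`f₁⁻¹ * f₀` in Mathlib's left-action convention, and the conjugate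
`f₁^{f₀} = f₀⁻¹f₁f₀` is the element `f₀ * f₁ * f₀⁻¹`.  Recall `⁅a,b⁆ = 1 ↔ a*b = b*a`. -/
def ThompsonRel (f₀ f₁ : Equiv.Perm ℝ) : Prop :=
  ⁅f₁⁻¹ * f₀, f₀ * f₁ * f₀⁻¹⁆ = 1 ∧ ⁅f₁⁻¹ * f₀, f₀ ^ 2 * f₁ * (f₀ ^ 2)⁻¹⁆ = 1

open Set Filter Topology

-- basic facts
theorem Equiv.Perm.apply_inv_self {α : Type*} (f : Equiv.Perm α) (x : α) : f (f⁻¹ x) = x :=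
  f.apply_symm_apply x

theorem Equiv.Perm.inv_apply_self {α : Type*} (f : Equiv.Perm α) (x : α) : f⁻¹ (f x) = x :=
  f.symm_apply_apply x

lemma perm_inv_strictMono (f : Equiv.Perm ℝ) (hf : StrictMono ⇑f) : StrictMono ⇑f⁻¹ := by
  intro x y hxy
  by_contra hc
  push_neg at hc
  have : f (f⁻¹ y) ≤ f (f⁻¹ x) := hf.monotone hc
  simp only [Equiv.Perm.apply_inv_self] at this
  exact absurd this (not_le.mpr hxy)

lemma perm_continuous (f : Equiv.Perm ℝ) (hf : StrictMono ⇑f) : Continuous ⇑f :=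
  (StrictMono.orderIsoOfSurjective ⇑f hf f.surjective).continuous

lemma fix_isClosed (f : Equiv.Perm ℝ) (hf : StrictMono ⇑f) : IsClosed {x : ℝ | f x = x} :=
  isClosed_eq (perm_continuous f hf) continuous_id

lemma IsPL0.supp_subset {f : Equiv.Perm ℝ} (hf : IsPL0 f) : Supp f ⊆ Ioo 0 1 := by
  intro x hx
  constructor
  · by_contra h; push_neg at h; exact hx (hf.2.1 x h)
  · by_contra h; push_neg at h; exact hx (hf.2.2.1 x h)

-- locally affine propagation to the right
lemma propagate_right (f : ℝ → ℝ) (α β : ℝ)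
    (h : ∀ x ∈ Ioo α β, ∃ s t : ℝ, ∀ᶠ y in nhds x, f y = s * y + t)
    (x₀ : ℝ) (hx₀ : x₀ ∈ Ioo α β) (s t : ℝ) (hst : ∀ᶠ y in nhds x₀, f y = s * y + t)
    (x : ℝ) (hx : x ∈ Ioo α β) (hxx : x₀ ≤ x) : f x = s * x + t := by
  -- S : set of r ∈ [x₀, x] such that f = affine on [x₀, r]
  set S : Set ℝ := {r ∈ Icc x₀ x | ∀ y ∈ Icc x₀ r, f y = s * y + t} with hS
  have hfx₀ : f x₀ = s * x₀ + t := hst.self_of_nhds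
  have hx₀S : x₀ ∈ S := by
    refine ⟨⟨le_refl _, hxx⟩, ?_⟩
    intro y hy
    have : y = x₀ := le_antisymm hy.2 hy.1
    rw [this]; exact hfx₀
  have hbdd : BddAbove S := ⟨x, fun r hr => hr.1.2⟩
  have hne : S.Nonempty := ⟨x₀, hx₀S⟩
  set z := sSup S with hz
  have hzx₀ : x₀ ≤ z := le_csSup hbdd hx₀S
  have hzx : z ≤ x := csSup_le hne (fun r hr => hr.1.2)
  have hzmem : z ∈ Ioo α β := ⟨lt_of_lt_of_le hx₀.1 hzx₀, lt_of_le_of_lt hzx hx.2⟩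
  -- f = affine on [x₀, z)
  have hIco : ∀ y ∈ Ico x₀ z, f y = s * y + t := by
    intro y hy
    obtain ⟨r, hrS, hyr⟩ := exists_lt_of_lt_csSup hne hy.2
    exact hrS.2 y ⟨hy.1, hyr.le⟩
  -- germ at z
  obtain ⟨s', t', hst'⟩ := h z hzmem
  obtain ⟨η, hη, hball⟩ := Metric.eventually_nhds_iff_ball.mp hst'
  -- if z > x₀ : the germs agree
  have hgermagree : ∀ᶠ y in nhds z, f y = s * y + t := by
    rcases eq_or_lt_of_le hzx₀ with hzz | hzz
    · rw [← hzz]; exact hst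
    · -- pick two points in (max x₀ (z - η), z)
      have hlt : max x₀ (z - η) < z := by
        rw [max_lt_iff]; exact ⟨hzz, by linarith⟩
      obtain ⟨y₁, hy₁⟩ := exists_between hlt
      obtain ⟨y₂, hy₂⟩ := exists_between hy₁.2
      have m1 : y₁ ∈ Ico x₀ z := ⟨(le_max_left _ _).trans hy₁.1.le, hy₁.2⟩
      have m2 : y₂ ∈ Ico x₀ z := ⟨(le_max_left _ _).trans (hy₁.1.trans hy₂.1).le, hy₂.2⟩
      have b1 : y₁ ∈ Metric.ball z η := by
        have := (le_max_right x₀ (z-η)).trans_lt hy₁.1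
        rw [Real.ball_eq_Ioo]; constructor <;> [linarith [hy₁.2, hy₂.2]; linarith [hy₁.2, hy₂.2]]
      have b2 : y₂ ∈ Metric.ball z η := by
        have := (le_max_right x₀ (z-η)).trans_lt (hy₁.1.trans hy₂.1)
        rw [Real.ball_eq_Ioo]; constructor <;> [linarith [hy₂.2]; linarith [hy₂.2]]
      have e1 : s * y₁ + t = s' * y₁ + t' := by rw [← hIco y₁ m1, hball _ b1]
      have e2 : s * y₂ + t = s' * y₂ + t' := by rw [← hIco y₂ m2, hball _ b2]
      have hss : s = s' := by
        have hne12 : y₁ ≠ y₂ := ne_of_lt hy₂.1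
        have : s * (y₁ - y₂) = s' * (y₁ - y₂) := by linarith
        have := mul_right_cancel₀ (sub_ne_zero.mpr hne12) this
        exact this
      have htt : t = t' := by rw [hss] at e1; linarith
      rw [hss, htt]; exact hst'
  -- hence z ∈ S
  have hfz : f z = s * z + t := hgermagree.self_of_nhds
  have hzS : z ∈ S := by
    refine ⟨⟨hzx₀, hzx⟩, ?_⟩
    intro y hy
    rcases eq_or_lt_of_le hy.2 with h1 | h1
    · rw [h1]; exact hfz
    · exact hIco y ⟨hy.1, h1⟩
  -- z = x
  rcases eq_or_lt_of_le hzx with hzx' | hzx'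
  · rw [← hzx']; exact hfz
  · -- extend past z : contradiction
    exfalso
    obtain ⟨η', hη', hball'⟩ := Metric.eventually_nhds_iff_ball.mp hgermagree
    set z' := min (z + η'/2) x with hz'
    have hzz' : z < z' := by
      rw [hz', lt_min_iff]; exact ⟨by linarith, hzx'⟩
    have hz'S : z' ∈ S := by
      refine ⟨⟨hzx₀.trans hzz'.le, min_le_right _ _⟩, ?_⟩
      intro y hy
      rcases le_or_gt y z with h2 | h2
      · exact hzS.2 y ⟨hy.1, h2⟩
      · apply hball' y _
        rw [Real.ball_eq_Ioo]
        constructor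
        · linarith
        · have : y ≤ z + η'/2 := hy.2.trans (min_le_left _ _)
          linarith
    have := le_csSup hbdd hz'S
    exact absurd this (not_le.mpr hzz')

lemma propagate_left (f : ℝ → ℝ) (α β : ℝ)
    (h : ∀ x ∈ Ioo α β, ∃ s t : ℝ, ∀ᶠ y in nhds x, f y = s * y + t)
    (x₀ : ℝ) (hx₀ : x₀ ∈ Ioo α β) (s t : ℝ) (hst : ∀ᶠ y in nhds x₀, f y = s * y + t)
    (x : ℝ) (hx : x ∈ Ioo α β) (hxx : x ≤ x₀) : f x = s * x + t := by
  -- apply propagate_right to F y = f (-y) on (-β, -α)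
  set F : ℝ → ℝ := fun y => f (-y) with hF
  have hcont : Continuous (fun y : ℝ => -y) := continuous_neg
  have hng : ∀ x ∈ Ioo (-β) (-α), ∃ s t : ℝ, ∀ᶠ y in nhds x, F y = s * y + t := by
    intro u hu
    obtain ⟨s', t', hst'⟩ := h (-u) ⟨by linarith [hu.2], by linarith [hu.1]⟩
    refine ⟨-s', t', ?_⟩
    have : Filter.Tendsto (fun y : ℝ => -y) (nhds u) (nhds (-u)) := (continuous_neg.tendsto u)
    filter_upwards [this.eventually hst'] with y hy
    rw [hF]; simp only []
    rw [hy]; ring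
  have hst2 : ∀ᶠ y in nhds (-x₀), F y = (-s) * y + t := by
    have : Filter.Tendsto (fun y : ℝ => -y) (nhds (-x₀)) (nhds x₀) := by
      have := (continuous_neg.tendsto (-x₀)); simpa using this
    filter_upwards [this.eventually hst] with y hy
    rw [hF]; simp only []; rw [hy]; ring
  have := propagate_right F (-β) (-α) hng (-x₀) ⟨by linarith [hx₀.2], by linarith [hx₀.1]⟩
      (-s) t hst2 (-x) ⟨by linarith [hx.2], by linarith [hx.1]⟩ (by linarith)
  rw [hF] at this; simp only [neg_neg] at this
  rw [this]; ring

lemma affine_of_locally_affine (f : ℝ → ℝ) (α β : ℝ) (hab : α < β)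
    (h : ∀ x ∈ Ioo α β, ∃ s t : ℝ, ∀ᶠ y in nhds x, f y = s * y + t) :
    ∃ s t : ℝ, ∀ x ∈ Ioo α β, f x = s * x + t := by
  obtain ⟨x₀, hx₀⟩ := nonempty_Ioo.mpr hab
  obtain ⟨s, t, hst⟩ := h x₀ hx₀
  refine ⟨s, t, fun x hx => ?_⟩
  rcases le_or_gt x₀ x with h1 | h1
  · exact propagate_right f α β h x₀ hx₀ s t hst x hx h1
  · exact propagate_left f α β h x₀ hx₀ s t hst x hx h1.le

-- ## Orbital basics

lemma orbital_exists (f : Equiv.Perm ℝ) (hf : IsPL0 f) (x : ℝ) (hx : x ∈ Supp f) :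
    ∃ b d : ℝ, IsOrbital f b d ∧ x ∈ Ioo b d := by
  have hmono := hf.1
  have hcl : IsClosed {y : ℝ | f y = y} := fix_isClosed f hmono
  have hx01 : x ∈ Ioo 0 1 := hf.supp_subset hx
  set Fx := {y : ℝ | f y = y} with hFx
  have h0 : (0:ℝ) ∈ Fx := hf.2.1 0 le_rfl
  have h1 : (1:ℝ) ∈ Fx := hf.2.2.1 1 le_rfl
  set L := Fx ∩ Iic x with hL
  set R := Fx ∩ Ici x with hR
  have hLne : L.Nonempty := ⟨0, h0, hx01.1.le⟩
  have hRne : R.Nonempty := ⟨1, h1, hx01.2.le⟩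
  have hLbdd : BddAbove L := ⟨x, fun y hy => hy.2⟩
  have hRbdd : BddBelow R := ⟨x, fun y hy => hy.2⟩
  have hLcl : IsClosed L := hcl.inter isClosed_Iic
  have hRcl : IsClosed R := hcl.inter isClosed_Ici
  set b := sSup L with hb
  set d := sInf R with hd
  have hbL : b ∈ L := hLcl.csSup_mem hLne hLbdd
  have hdR : d ∈ R := hRcl.csInf_mem hRne hRbdd
  have hbx : b < x := lt_of_le_of_ne hbL.2 (fun h => hx (h ▸ hbL.1))
  have hxd : x < d := lt_of_le_of_ne hdR.2 (fun h => hx (by rw [h]; exact hdR.1))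
  refine ⟨b, d, ⟨hbx.trans hxd, ?_, hbL.1, hdR.1⟩, hbx, hxd⟩
  intro y hy hyfix
  rcases le_or_gt y x with h2 | h2
  · have : y ≤ b := le_csSup hLbdd ⟨hyfix, h2⟩
    exact absurd this (not_le.mpr hy.1)
  · have : d ≤ y := csInf_le hRbdd ⟨hyfix, h2.le⟩
    exact absurd this (not_le.mpr hy.2)

lemma orbital_eq_of_overlap (f : Equiv.Perm ℝ) {b d b' d' : ℝ}
    (h1 : IsOrbital f b d) (h2 : IsOrbital f b' d')
    (hne : (Ioo b d ∩ Ioo b' d').Nonempty) : b = b' ∧ d = d' := by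
  obtain ⟨x, hx1, hx2⟩ := hne
  have key : ∀ {u v u' v' : ℝ}, IsOrbital f u v → IsOrbital f u' v' →
      x ∈ Ioo u v → x ∈ Ioo u' v' → u' ≤ u := by
    intro u v u' v' o1 o2 m1 m2
    by_contra hc
    push_neg at hc
    have hm : u' ∈ Ioo u v := ⟨hc, m2.1.trans m1.2⟩
    exact (o1.2.1 hm) o2.2.2.1
  have hb : b = b' := le_antisymm (key h2 h1 hx2 hx1) (key h1 h2 hx1 hx2)
  have key2 : ∀ {u v u' v' : ℝ}, IsOrbital f u v → IsOrbital f u' v' →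
      x ∈ Ioo u v → x ∈ Ioo u' v' → v ≤ v' := by
    intro u v u' v' o1 o2 m1 m2
    by_contra hc
    push_neg at hc
    have hm : v' ∈ Ioo u v := ⟨m1.1.trans m2.2, hc⟩
    exact (o1.2.1 hm) o2.2.2.2
  exact ⟨hb, le_antisymm (key2 h1 h2 hx1 hx2) (key2 h2 h1 hx2 hx1)⟩

lemma orbital_conj (σ f : Equiv.Perm ℝ) (hσ : StrictMono ⇑σ) {b d : ℝ}
    (h : IsOrbital f b d) : IsOrbital (σ * f * σ⁻¹) (σ b) (σ d) := by
  refine ⟨hσ h.1, ?_, ?_, ?_⟩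
  · intro y hy
    have h1 : σ⁻¹ y ∈ Ioo b d := by
      constructor
      · have := perm_inv_strictMono σ hσ hy.1
        simpa using this
      · have := perm_inv_strictMono σ hσ hy.2
        simpa using this
    have h2 := h.2.1 h1
    intro hc
    apply h2
    have : σ (f (σ⁻¹ y)) = y := hc
    have := congrArg (⇑σ⁻¹) this
    simpa using this
  · show σ (f (σ⁻¹ (σ b))) = σ b
    rw [Equiv.Perm.inv_apply_self, h.2.2.1]
  · show σ (f (σ⁻¹ (σ d))) = σ d
    rw [Equiv.Perm.inv_apply_self, h.2.2.2]

-- sign constancy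
lemma sign_const (f : Equiv.Perm ℝ) (hmono : StrictMono ⇑f) {b d : ℝ}
    (hbd : b < d) (hfpf : ∀ x ∈ Ioo b d, f x ≠ x) {x y : ℝ}
    (hx : x ∈ Ioo b d) (hy : y ∈ Ioo b d) (hfx : x < f x) : y < f y := by
  by_contra hc
  push_neg at hc
  have hyy : f y < y := lt_of_le_of_ne hc (hfpf y hy)
  have hcont : Continuous (fun z => f z - z) := (perm_continuous f hmono).sub continuous_id
  rcases le_or_gt x y with hxy | hxy
  · have : (0:ℝ) ∈ Icc (f y - y) (f x - x) := ⟨by linarith, by linarith⟩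
    have := intermediate_value_Icc' hxy hcont.continuousOn this
    obtain ⟨z, hz, hz0⟩ := this
    have hzm : z ∈ Ioo b d := ⟨hx.1.trans_le hz.1, lt_of_le_of_lt hz.2 hy.2⟩
    simp only [] at hz0
    exact hfpf z hzm (by linarith : f z = z)
  · have : (0:ℝ) ∈ Icc (f y - y) (f x - x) := ⟨by linarith, by linarith⟩
    have := intermediate_value_Icc hxy.le hcont.continuousOn this
    obtain ⟨z, hz, hz0⟩ := this
    have hzm : z ∈ Ioo b d := ⟨hy.1.trans_le hz.1, lt_of_le_of_lt hz.2 hx.2⟩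
    simp only [] at hz0
    exact hfpf z hzm (by linarith : f z = z)

-- ## Finiteness of orbitals

lemma breakpoint_in_orbital (f : Equiv.Perm ℝ) (hf : IsPL0 f) (B : Finset ℝ)
    (hB : ∀ x : ℝ, x ∉ B → ∃ s t : ℝ, ∀ᶠ y in nhds x, f y = s * y + t)
    {b d : ℝ} (horb : IsOrbital f b d) : ∃ p ∈ B, p ∈ Ioo b d := by
  by_contra hc
  push_neg at hc
  have hloc : ∀ x ∈ Ioo b d, ∃ s t : ℝ, ∀ᶠ y in nhds x, f y = s * y + t := by
    intro x hx
    exact hB x (fun hxB => hc x hxB hx)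
  obtain ⟨s, t, hst⟩ := affine_of_locally_affine (⇑f) b d horb.1 hloc
  have hcont : Continuous ⇑f := perm_continuous f hf.1
  have haff : Continuous (fun y : ℝ => s * y + t) := by continuity
  have heq : EqOn (⇑f) (fun y : ℝ => s * y + t) (Ioo b d) := fun x hx => hst x hx
  have heqc : EqOn (⇑f) (fun y : ℝ => s * y + t) (Icc b d) := by
    have := heq.closure hcont haff
    rwa [closure_Ioo (ne_of_lt horb.1)] at this
  have hfb : s * b + t = b := by
    have h1 := heqc ⟨le_refl _, horb.1.le⟩
    simp only [] at h1
    have h2 := horb.2.2.1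
    linarith [h1, h2]
  have hfd : s * d + t = d := by
    have h1 := heqc ⟨horb.1.le, le_refl _⟩
    simp only [] at h1
    have h2 := horb.2.2.2
    linarith [h1, h2]
  have hs1 : s = 1 := by
    have hbd' : b - d ≠ 0 := sub_ne_zero.mpr (ne_of_lt horb.1)
    exact mul_right_cancel₀ hbd' (by linarith : s * (b - d) = 1 * (b - d))
  have ht0 : t = 0 := by rw [hs1] at hfb; linarith
  obtain ⟨x, hx⟩ := nonempty_Ioo.mpr horb.1
  exact (horb.2.1 hx) (by rw [hst x hx, hs1, ht0]; ring)

lemma leftEndpoints_finite (f : Equiv.Perm ℝ) (hf : IsPL0 f) :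
    {y : ℝ | ∃ z, IsOrbital f y z}.Finite := by
  obtain ⟨B, hB⟩ := hf.2.2.2
  set T := {y : ℝ | ∃ z, IsOrbital f y z} with hT
  have hchoice : ∀ y ∈ T, ∃ p, p ∈ B ∧ ∃ z, IsOrbital f y z ∧ p ∈ Ioo y z := by
    intro y hy
    obtain ⟨z, hz⟩ := hy
    obtain ⟨p, hpB, hpI⟩ := breakpoint_in_orbital f hf B hB hz
    exact ⟨p, hpB, z, hz, hpI⟩
  classical
  set ψ : ℝ → ℝ := fun y => if h : y ∈ T then (hchoice y h).choose else 0 with hψ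
  have hψspec : ∀ y (h : y ∈ T), ψ y ∈ B ∧ ∃ z, IsOrbital f y z ∧ ψ y ∈ Ioo y z := by
    intro y h
    simp only [hψ, dif_pos h]
    exact (hchoice y h).choose_spec
  have himage : ψ '' T ⊆ (B : Set ℝ) := by
    rintro _ ⟨y, hy, rfl⟩; exact (hψspec y hy).1
  have hinj : Set.InjOn ψ T := by
    intro y hy y' hy' heq
    obtain ⟨_, z, hz, hin⟩ := hψspec y hy
    obtain ⟨_, z', hz', hin'⟩ := hψspec y' hy'
    have : (Ioo y z ∩ Ioo y' z').Nonempty := ⟨ψ y, hin, heq ▸ hin'⟩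
    exact (orbital_eq_of_overlap f hz hz' this).1
  exact Set.Finite.of_finite_image (B.finite_toSet.subset himage) hinj

lemma fix_of_invariant_finite (s : Set ℝ) (hs : s.Finite) (φ : Equiv.Perm ℝ)
    (hφ : StrictMono ⇑φ) (h1 : ∀ x ∈ s, φ x ∈ s) (h2 : ∀ x ∈ s, φ⁻¹ x ∈ s) :
    ∀ x ∈ s, φ x = x := by
  intro x hx
  by_contra hne
  rcases lt_or_gt_of_ne hne with hlt | hgt
  · -- φ x < x : φ⁻¹ maps s ∩ Iic x into s ∩ Iic (φ... use mirror: consider A = s ∩ Iic x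
    -- φ maps A into A \ {x}? φ y ≤ φ x < x for y ≤ x. yes
    set A := s ∩ Iic x with hA
    have hAfin : A.Finite := hs.inter_of_left _
    have hmaps : ∀ y ∈ A, φ y ∈ A \ {x} := by
      intro y hy
      have : φ y ≤ φ x := hφ.monotone hy.2
      exact ⟨⟨h1 y hy.1, this.trans hlt.le⟩, by intro hc; simp at hc; subst hc; linarith⟩
    have hxA : x ∈ A := ⟨hx, mem_Iic.mpr le_rfl⟩
    have hinj : Set.InjOn (⇑φ) A := (φ.injective.injOn)
    have h3 : φ '' A ⊆ A \ {x} := by rintro _ ⟨y, hy, rfl⟩; exact hmaps y hy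
    have h4 : (A \ {x}).ncard < A.ncard := Set.ncard_diff_singleton_lt_of_mem hxA hAfin
    have h5 : (φ '' A).ncard = A.ncard := Set.ncard_image_of_injOn hinj
    have h6 : (φ '' A).ncard ≤ (A \ {x}).ncard := Set.ncard_le_ncard h3 hAfin.diff
    omega
  · set A := s ∩ Ici x with hA
    have hAfin : A.Finite := hs.inter_of_left _
    have hmaps : ∀ y ∈ A, φ y ∈ A \ {x} := by
      intro y hy
      have : φ x ≤ φ y := hφ.monotone hy.2
      exact ⟨⟨h1 y hy.1, (hgt.le.trans this : x ≤ φ y)⟩, by intro hc; simp at hc; subst hc; linarith⟩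
    have hxA : x ∈ A := ⟨hx, mem_Ici.mpr le_rfl⟩
    have hinj : Set.InjOn (⇑φ) A := (φ.injective.injOn)
    have h3 : φ '' A ⊆ A \ {x} := by rintro _ ⟨y, hy, rfl⟩; exact hmaps y hy
    have h4 : (A \ {x}).ncard < A.ncard := Set.ncard_diff_singleton_lt_of_mem hxA hAfin
    have h5 : (φ '' A).ncard = A.ncard := Set.ncard_image_of_injOn hinj
    have h6 : (φ '' A).ncard ≤ (A \ {x}).ncard := Set.ncard_le_ncard h3 hAfin.diff
    omega

lemma commuting_fixes_orbital (f φ : Equiv.Perm ℝ) (hf : IsPL0 f)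
    (hφ : StrictMono ⇑φ) (hc : φ * f = f * φ) {b d : ℝ}
    (horb : IsOrbital f b d) : φ b = b ∧ φ d = d := by
  have hconj : φ * f * φ⁻¹ = f := by
    rw [hc]; group
  have hconj' : φ⁻¹ * f * φ = f := by
    have : φ⁻¹ * (f * φ) = φ⁻¹ * (φ * f) := by rw [← hc]
    rw [← mul_assoc, ← mul_assoc] at this
    simpa using this
  set T := {y : ℝ | ∃ z, IsOrbital f y z} with hT
  have hTfin : T.Finite := leftEndpoints_finite f hf
  have hmaps : ∀ y ∈ T, φ y ∈ T := by
    rintro y ⟨z, hz⟩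
    have := orbital_conj φ f hφ hz
    rw [hconj] at this
    exact ⟨φ z, this⟩
  have hmaps' : ∀ y ∈ T, φ⁻¹ y ∈ T := by
    rintro y ⟨z, hz⟩
    have := orbital_conj φ⁻¹ f (perm_inv_strictMono φ hφ) hz
    rw [inv_inv, hconj'] at this
    exact ⟨φ⁻¹ z, this⟩
  have hbT : b ∈ T := ⟨d, horb⟩
  have hφb : φ b = b := fix_of_invariant_finite T hTfin φ hφ hmaps hmaps' b hbT
  -- now the image orbital has same left endpoint
  have himg := orbital_conj φ f hφ horb
  rw [hconj, hφb] at himg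
  have : (Ioo b d ∩ Ioo b (φ d)).Nonempty := by
    obtain ⟨x, hx⟩ := nonempty_Ioo.mpr (lt_min horb.1 himg.1)
    exact ⟨x, ⟨hx.1, hx.2.trans_le (min_le_left _ _)⟩, ⟨hx.1, hx.2.trans_le (min_le_right _ _)⟩⟩
  exact ⟨hφb, ((orbital_eq_of_overlap f horb himg this).2).symm⟩

-- ## PL0 closure under group operations

lemma IsPL0.mul {f g : Equiv.Perm ℝ} (hf : IsPL0 f) (hg : IsPL0 g) : IsPL0 (f * g) := by
  obtain ⟨Bf, hBf⟩ := hf.2.2.2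
  obtain ⟨Bg, hBg⟩ := hg.2.2.2
  classical
  refine ⟨hf.1.comp hg.1, ?_, ?_, ?_⟩
  · intro x hx; show f (g x) = x; rw [hg.2.1 x hx, hf.2.1 x hx]
  · intro x hx; show f (g x) = x; rw [hg.2.2.1 x hx, hf.2.2.1 x hx]
  · refine ⟨Bg ∪ Finset.image (⇑g⁻¹) Bf, ?_⟩
    intro x hx
    simp only [Finset.mem_union, Finset.mem_image, not_or, not_exists] at hx
    obtain ⟨s, t, hst⟩ := hBg x hx.1
    have hgx : g x ∉ Bf := by
      intro hc
      exact hx.2 (g x) ⟨hc, by simp⟩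
    obtain ⟨s', t', hst'⟩ := hBf (g x) hgx
    refine ⟨s' * s, s' * t + t', ?_⟩
    have hgc : Continuous ⇑g := perm_continuous g hg.1
    have htends : Filter.Tendsto (⇑g) (nhds x) (nhds (g x)) := hgc.tendsto x
    filter_upwards [hst, htends.eventually hst'] with y h1 h2
    show f (g y) = s' * s * y + (s' * t + t')
    rw [h2, h1]; ring

lemma IsPL0.inv {f : Equiv.Perm ℝ} (hf : IsPL0 f) : IsPL0 f⁻¹ := by
  obtain ⟨Bf, hBf⟩ := hf.2.2.2
  classical
  have hmono := hf.1
  refine ⟨perm_inv_strictMono f hmono, ?_, ?_, ?_⟩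
  · intro x hx
    have := hf.2.1 x hx
    have := congrArg (⇑f⁻¹) this
    simpa using this.symm
  · intro x hx
    have := hf.2.2.1 x hx
    have := congrArg (⇑f⁻¹) this
    simpa using this.symm
  · refine ⟨Finset.image (⇑f) Bf, ?_⟩
    intro x hx
    have hfx : f⁻¹ x ∉ Bf := by
      intro hc
      apply hx
      simp only [Finset.mem_image]
      exact ⟨f⁻¹ x, hc, by simp⟩
    obtain ⟨s, t, hst⟩ := hBf (f⁻¹ x) hfx
    obtain ⟨δ, hδ, hball⟩ := Metric.eventually_nhds_iff_ball.mp hst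
    set z := f⁻¹ x with hz
    have hm1 : z - δ/2 ∈ Metric.ball z δ := by
      rw [Real.ball_eq_Ioo]; constructor <;> linarith
    have hm2 : z ∈ Metric.ball z δ := by
      rw [Real.ball_eq_Ioo]; constructor <;> linarith
    have h1 := hball _ hm1
    have h2 := hball _ hm2
    have hs : 0 < s := by
      have hlt : f (z - δ/2) < f z := hmono (by linarith)
      rw [h1, h2] at hlt
      nlinarith
    refine ⟨1/s, -t/s, ?_⟩
    have hxz : f z = x := by simp [hz]
    have hIoo : Ioo (f (z - δ/2)) (f (z + δ/2)) ∈ nhds x := by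
      apply Ioo_mem_nhds
      · rw [← hxz]; exact hmono (by linarith)
      · rw [← hxz]; exact hmono (by linarith)
    filter_upwards [hIoo] with y hy
    have hy1 : z - δ/2 < f⁻¹ y := by
      have := perm_inv_strictMono f hmono hy.1
      simpa using this
    have hy2 : f⁻¹ y < z + δ/2 := by
      have := perm_inv_strictMono f hmono hy.2
      simpa using this
    have hmem : f⁻¹ y ∈ Metric.ball z δ := by
      rw [Real.ball_eq_Ioo]; constructor <;> linarith
    have h3 := hball _ hmem
    have h4 : f (f⁻¹ y) = y := by simp
    rw [h4] at h3
    set u := f⁻¹ y with hu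
    show u = 1/s * y + -t/s
    have hss : s ≠ 0 := ne_of_gt hs
    field_simp
    linarith

-- ## affine pieces near a point

lemma finset_avoid_left (s : Finset ℝ) (z : ℝ) : ∃ δ > 0, ∀ y ∈ s, y ∉ Ioo (z - δ) z := by
  classical
  set s' := s.filter (fun y => y < z) with hs'
  by_cases hne : s'.Nonempty
  · refine ⟨z - s'.max' hne, ?_, ?_⟩
    · have := (Finset.mem_filter.mp (s'.max'_mem hne)).2
      linarith
    · intro y hy hmem
      rcases lt_or_ge y z with h1 | h1
      · have hy' : y ∈ s' := Finset.mem_filter.mpr ⟨hy, h1⟩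
        have := Finset.le_max' s' y hy'
        have h2 := hmem.1
        linarith
      · exact absurd hmem.2 (not_lt.mpr h1)
  · refine ⟨1, one_pos, ?_⟩
    intro y hy hmem
    apply hne
    exact ⟨y, Finset.mem_filter.mpr ⟨hy, hmem.2⟩⟩

lemma pl_affine_near_left (g : Equiv.Perm ℝ) (hg : IsPL0 g) (z : ℝ) :
    ∃ δ > 0, ∃ s t : ℝ, ∀ x ∈ Ioo (z - δ) z, g x = s * x + t := by
  obtain ⟨B, hB⟩ := hg.2.2.2
  obtain ⟨δ, hδ, havoid⟩ := finset_avoid_left B z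
  have hlt : z - δ < z := by linarith
  have hloc : ∀ x ∈ Ioo (z - δ) z, ∃ s t : ℝ, ∀ᶠ y in nhds x, g y = s * y + t := by
    intro x hx
    exact hB x (fun hxB => havoid x hxB hx)
  obtain ⟨s, t, hst⟩ := affine_of_locally_affine (⇑g) (z - δ) z hlt hloc
  exact ⟨δ, hδ, s, t, hst⟩

-- ## iterates inside an orbital

lemma iterate_orbital (h : Equiv.Perm ℝ) (hhm : StrictMono ⇑h)
    {b d : ℝ} (hb : h b = b) (hd : h d = d)
    (hpos : ∀ x ∈ Ioo b d, x < h x) (x : ℝ) (hx : x ∈ Ioo b d) :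
    (∀ n : ℕ, (⇑h)^[n] x ∈ Ioo b d) ∧
      Filter.Tendsto (fun n => (⇑h)^[n] x) Filter.atTop (nhds d) := by
  have hcont : Continuous ⇑h := perm_continuous h hhm
  set q : ℕ → ℝ := fun n => (⇑h)^[n] x with hq
  have hmem : ∀ n, q n ∈ Ioo b d := by
    intro n
    induction n with
    | zero => simpa [hq] using hx
    | succ k ih =>
      have : q (k+1) = h (q k) := by
        simp only [hq, Function.iterate_succ_apply']
      rw [this]
      constructor
      · calc b < q k := ih.1
          _ < h (q k) := hpos _ ih
      · calc h (q k) < h d := hhm ih.2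
          _ = d := hd
  have hmono : Monotone q := by
    apply monotone_nat_of_le_succ
    intro n
    have : q (n+1) = h (q n) := by simp only [hq, Function.iterate_succ_apply']
    rw [this]
    exact (hpos _ (hmem n)).le
  have hbdd : BddAbove (Set.range q) := ⟨d, by rintro _ ⟨n, rfl⟩; exact (hmem n).2.le⟩
  have hlim := tendsto_atTop_ciSup hmono hbdd
  set L := ⨆ n, q n with hL
  have hLd : L ≤ d := ciSup_le (fun n => (hmem n).2.le)
  have hLb : b < L := lt_of_lt_of_le (hmem 0).1 (le_ciSup hbdd 0)
  have hfixL : h L = L := by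
    have h1 : Filter.Tendsto (fun n => h (q n)) Filter.atTop (nhds (h L)) :=
      (hcont.tendsto L).comp hlim
    have h2 : (fun n => h (q n)) = fun n => q (n+1) := by
      funext n; simp only [hq, Function.iterate_succ_apply']
    rw [h2] at h1
    have h3 : Filter.Tendsto (fun n => q (n+1)) Filter.atTop (nhds L) :=
      hlim.comp (Filter.tendsto_add_atTop_nat 1)
    exact tendsto_nhds_unique h1 h3
  have hLeq : L = d := by
    rcases eq_or_lt_of_le hLd with h1 | h1
    · exact h1
    · exfalso
      have : L < h L := hpos L ⟨hLb, h1⟩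
      rw [hfixL] at this
      exact lt_irrefl _ this
  rw [hLeq] at hlim
  exact ⟨hmem, hlim⟩

-- ## the rigidity lemma

lemma lemmaR_pos (h g : Equiv.Perm ℝ) (hhm : StrictMono ⇑h) (hg : IsPL0 g)
    {b d p : ℝ} (hb : h b = b) (hd : h d = d)
    (hpos : ∀ x ∈ Ioo b d, x < h x)
    (hcomm : ∀ x ∈ Ioo b d, g (h x) = h (g x))
    (hp : p ∈ Ioo b d) (hgp : g p = p) :
    ∀ x ∈ Ioo b d, g x = x := by
  obtain ⟨hqmem, hqlim⟩ := iterate_orbital h hhm hb hd hpos p hp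
  -- g fixes the orbit of p
  have hgq : ∀ n : ℕ, g ((⇑h)^[n] p) = (⇑h)^[n] p := by
    intro n
    induction n with
    | zero => simpa using hgp
    | succ k ih =>
      rw [Function.iterate_succ_apply', hcomm _ (hqmem k), ih]
  -- affine piece of g near d on the left
  obtain ⟨δ, hδ, s, t, haff⟩ := pl_affine_near_left g hg d
  -- find N with both iterates in the affine piece
  have hev : ∀ᶠ n in Filter.atTop, d - δ < (⇑h)^[n] p :=
    hqlim.eventually (eventually_gt_nhds (by linarith))
  obtain ⟨N, hN⟩ := hev.exists
  set y₁ := (⇑h)^[N] p with hy₁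
  set y₂ := (⇑h)^[N+1] p with hy₂
  have hy12 : y₁ < y₂ := by
    rw [hy₂, Function.iterate_succ_apply']
    exact hpos _ (hqmem N)
  have hm1 : y₁ ∈ Ioo (d - δ) d := ⟨hN, (hqmem N).2⟩
  have hm2 : y₂ ∈ Ioo (d - δ) d := ⟨hN.trans hy12, (hqmem (N+1)).2⟩
  have e1 : s * y₁ + t = y₁ := by rw [← haff y₁ hm1]; exact hgq N
  have e2 : s * y₂ + t = y₂ := by rw [← haff y₂ hm2]; exact hgq (N+1)
  have hs1 : s = 1 := by
    have hne : y₁ - y₂ ≠ 0 := sub_ne_zero.mpr (ne_of_lt hy12)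
    exact mul_right_cancel₀ hne (by linarith : s * (y₁ - y₂) = 1 * (y₁ - y₂))
  have ht0 : t = 0 := by rw [hs1] at e1; linarith
  have hEq : ∀ y ∈ Ioo (d - δ) d, g y = y := by
    intro y hy
    rw [haff y hy, hs1, ht0]; ring
  -- descending induction
  have hdesc : ∀ n : ℕ, ∀ x ∈ Ioo b d, g ((⇑h)^[n] x) = (⇑h)^[n] x → g x = x := by
    intro n
    induction n with
    | zero => intro x _ hx0; simpa using hx0
    | succ k ih =>
      intro x hxm hx0
      have hhx : h x ∈ Ioo b d :=
        ⟨lt_trans hxm.1 (hpos x hxm), by rw [← hd]; exact hhm hxm.2⟩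
      rw [Function.iterate_succ_apply] at hx0
      have := ih (h x) hhx hx0
      rw [hcomm x hxm] at this
      exact h.injective this
  intro x hx
  obtain ⟨hxmem, hxlim⟩ := iterate_orbital h hhm hb hd hpos x hx
  have hev' : ∀ᶠ n in Filter.atTop, d - δ < (⇑h)^[n] x :=
    hxlim.eventually (eventually_gt_nhds (by linarith))
  obtain ⟨M, hM⟩ := hev'.exists
  exact hdesc M x hx (hEq _ ⟨hM, (hxmem M).2⟩)

lemma lemmaR (h g : Equiv.Perm ℝ) (hhm : StrictMono ⇑h) (hg : IsPL0 g)
    {b d p : ℝ} (hbd : b < d) (hb : h b = b) (hd : h d = d)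
    (hfpf : ∀ x ∈ Ioo b d, h x ≠ x)
    (hcomm : ∀ x ∈ Ioo b d, g (h x) = h (g x))
    (hp : p ∈ Ioo b d) (hgp : g p = p) :
    ∀ x ∈ Ioo b d, g x = x := by
  set x₀ := (b + d)/2 with hx₀
  have hx₀m : x₀ ∈ Ioo b d := ⟨by simp [hx₀]; linarith, by simp [hx₀]; linarith⟩
  rcases lt_or_gt_of_ne (hfpf x₀ hx₀m).symm with hlt | hgt
  · -- x₀ < h x₀ : h positive
    have hpos : ∀ x ∈ Ioo b d, x < h x :=
      fun x hxm => sign_const h hhm hbd hfpf hx₀m hxm hlt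
    exact lemmaR_pos h g hhm hg hb hd hpos hcomm hp hgp
  · -- h x₀ < x₀ : use h⁻¹
    have hinvm : StrictMono ⇑h⁻¹ := perm_inv_strictMono h hhm
    have hib : h⁻¹ b = b := by
      have := congrArg (⇑h⁻¹) hb; simpa using this.symm
    have hid : h⁻¹ d = d := by
      have := congrArg (⇑h⁻¹) hd; simpa using this.symm
    have hifpf : ∀ x ∈ Ioo b d, h⁻¹ x ≠ x := by
      intro x hxm hc
      have := congrArg (⇑h) hc
      simp only [Equiv.Perm.apply_inv_self] at this
      exact hfpf x hxm this.symm
    have hx₀i : x₀ < h⁻¹ x₀ := by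
      have := hinvm hgt
      simpa using this
    have hipos : ∀ x ∈ Ioo b d, x < h⁻¹ x :=
      fun x hxm => sign_const h⁻¹ hinvm hbd hifpf hx₀m hxm hx₀i
    have hicomm : ∀ x ∈ Ioo b d, g (h⁻¹ x) = h⁻¹ (g x) := by
      intro x hxm
      have hmem : h⁻¹ x ∈ Ioo b d := by
        constructor
        · rw [← hib]; exact hinvm hxm.1
        · rw [← hid]; exact hinvm hxm.2
      have := hcomm _ hmem
      simp only [Equiv.Perm.apply_inv_self] at this
      have := congrArg (⇑h⁻¹) this
      simp only [Equiv.Perm.inv_apply_self] at this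
      exact this.symm
  -- apply pos version
    exact lemmaR_pos h⁻¹ g hinvm hg hib hid hipos hicomm hp hgp

-- ## one-sided slope at a fixed point

def HasLeftGerm (f : ℝ → ℝ) (z s : ℝ) : Prop :=
  ∃ δ > 0, ∀ x ∈ Ioo (z - δ) z, f x = z + s * (x - z)

lemma hasLeftGerm_of_PL0 (f : Equiv.Perm ℝ) (hf : IsPL0 f) (z : ℝ) (hz : f z = z) :
    ∃ s : ℝ, 0 < s ∧ HasLeftGerm (⇑f) z s := by
  obtain ⟨δ, hδ, s, t, haff⟩ := pl_affine_near_left f hf z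
  have hcont : Continuous ⇑f := perm_continuous f hf.1
  -- by continuity, f z = s z + t
  have hzval : z = s * z + t := by
    have heq : EqOn (⇑f) (fun y : ℝ => s * y + t) (Ioo (z - δ) z) := fun x hx => haff x hx
    have hcl := heq.closure hcont (by continuity)
    have hmem : z ∈ closure (Ioo (z - δ) z) := by
      rw [closure_Ioo (by linarith : z - δ ≠ z)]
      exact ⟨by linarith, le_refl _⟩
    have := hcl hmem
    simpa [hz] using this
  have hs : 0 < s := by
    have hx : z - δ/2 ∈ Ioo (z - δ) z := ⟨by linarith, by linarith⟩
    have h1 := haff _ hx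
    have h2 : f (z - δ/2) < f z := hf.1 (by linarith)
    rw [hz, h1] at h2
    nlinarith
  refine ⟨s, hs, δ, hδ, ?_⟩
  intro x hx
  rw [haff x hx]
  linarith [hzval]

lemma HasLeftGerm.comp {f g : ℝ → ℝ} {z s s' : ℝ} (hs' : 0 < s')
    (hf : HasLeftGerm f z s) (hg : HasLeftGerm g z s') :
    HasLeftGerm (fun x => f (g x)) z (s * s') := by
  obtain ⟨δf, hδf, haf⟩ := hf
  obtain ⟨δg, hδg, hag⟩ := hg
  refine ⟨min δg (δf / s'), lt_min hδg (by positivity), ?_⟩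
  intro x hx
  have hx1 : x ∈ Ioo (z - δg) z :=
    ⟨by have := hx.1; have := min_le_left δg (δf / s'); linarith, hx.2⟩
  have hgx := hag x hx1
  have hgmem : g x ∈ Ioo (z - δf) z := by
    rw [hgx]
    constructor
    · have hxlow : z - δf / s' < x := by
        have := hx.1; have := min_le_right δg (δf / s'); linarith
      have : -(δf) < s' * (x - z) := by
        have h2 : x - z > -(δf/s') := by linarith
        calc -(δf) = s' * (-(δf/s')) := by field_simp
          _ < s' * (x - z) := by apply mul_lt_mul_of_pos_left h2 hs'
      linarith
    · have : s' * (x - z) < 0 := mul_neg_of_pos_of_neg hs' (by linarith [hx.2])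
      linarith
  have := haf _ hgmem
  simp only []
  rw [this, hgx]
  ring

lemma HasLeftGerm.perm_inv {f : Equiv.Perm ℝ} {z s : ℝ} (hs : 0 < s) (hz : f z = z)
    (hf : HasLeftGerm (⇑f) z s) : HasLeftGerm (⇑f⁻¹) z s⁻¹ := by
  obtain ⟨δ, hδ, haf⟩ := hf
  refine ⟨s * δ, by positivity, ?_⟩
  intro x hx
  set y := z + s⁻¹ * (x - z) with hy
  have hymem : y ∈ Ioo (z - δ) z := by
    constructor
    · have h1 : x - z > -(s * δ) := by linarith [hx.1]
      have : s⁻¹ * (x - z) > s⁻¹ * (-(s * δ)) := by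
        apply mul_lt_mul_of_pos_left h1 (by positivity)
      have h2 : s⁻¹ * (-(s*δ)) = -δ := by field_simp
      rw [h2] at this
      simp only [hy]; linarith
    · have : s⁻¹ * (x - z) < 0 := mul_neg_of_pos_of_neg (by positivity) (by linarith [hx.2])
      simp only [hy]; linarith
  have hfy : f y = x := by
    rw [haf y hymem]
    simp only [hy]
    field_simp
    ring
  have : f⁻¹ x = y := by
    rw [← hfy]; simp
  rw [this]

lemma HasLeftGerm.congr_slope {f : ℝ → ℝ} {z s s' : ℝ} (hf : HasLeftGerm f z s)
    (hss : s = s') : HasLeftGerm f z s' := hss ▸ hf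

-- ## The central lemma : the left endpoint of an orbital of f₀ cannot lie strictly
-- inside an orbital of f₁.


lemma badconfig (f₀ f₁ : Equiv.Perm ℝ) (h₀ : IsPL0 f₀) (h₁ : IsPL0 f₁)
    (hrel : ThompsonRel f₀ f₁) (a c b d : ℝ)
    (horb₀ : IsOrbital f₀ a c) (horb₁ : IsOrbital f₁ b d)
    (hba : b < a) (had : a < d) : False := by
  have m₀ := h₀.1
  have m₁ := h₁.1
  set g : Equiv.Perm ℝ := f₁⁻¹ * f₀ with hgdef
  set Y₁ : Equiv.Perm ℝ := f₀ * f₁ * f₀⁻¹ with hY₁def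
  set Y₂ : Equiv.Perm ℝ := f₀ ^ 2 * f₁ * (f₀ ^ 2)⁻¹ with hY₂def
  set p₁ : Equiv.Perm ℝ := f₀⁻¹ * f₁⁻¹ * f₀ ^ 2 with hp₁def
  set p₂ : Equiv.Perm ℝ := (f₀ ^ 2)⁻¹ * f₁⁻¹ * f₀ ^ 2 * f₀ with hp₂def
  have hcomm1 : g * Y₁ = Y₁ * g := by
    rw [← commutatorElement_eq_one_iff_mul_comm]; exact hrel.1
  have hcomm2 : g * Y₂ = Y₂ * g := by
    rw [← commutatorElement_eq_one_iff_mul_comm]; exact hrel.2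
  have hcp₁ : p₁ * f₁ = f₁ * p₁ := by
    have e1 : p₁ * f₁ = f₀⁻¹ * (g * Y₁) * f₀ := by
      rw [hp₁def, hgdef, hY₁def, sq]; group
    have e2 : f₁ * p₁ = f₀⁻¹ * (Y₁ * g) * f₀ := by
      rw [hp₁def, hgdef, hY₁def, sq]; group
    rw [e1, e2, hcomm1]
  have hcp₂ : p₂ * f₁ = f₁ * p₂ := by
    have e1 : p₂ * f₁ = (f₀ ^ 2)⁻¹ * (g * Y₂) * f₀ ^ 2 := by
      rw [hp₂def, hgdef, hY₂def, sq]; group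
    have e2 : f₁ * p₂ = (f₀ ^ 2)⁻¹ * (Y₂ * g) * f₀ ^ 2 := by
      rw [hp₂def, hgdef, hY₂def, sq]; group
    rw [e1, e2, hcomm2]
  -- pointwise helper
  have ptw : ∀ (u v : Equiv.Perm ℝ), u * v = v * u → ∀ x : ℝ, u (v x) = v (u x) := by
    intro u v huv x
    have : (u * v) x = (v * u) x := by rw [huv]
    simpa [Equiv.Perm.mul_apply] using this
  -- PL0 closure facts
  have hsq : f₀ ^ 2 = f₀ * f₀ := sq f₀
  have h₀2 : IsPL0 (f₀ ^ 2) := by rw [hsq]; exact h₀.mul h₀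
  have hgPL : IsPL0 g := h₁.inv.mul h₀
  have hY₁PL : IsPL0 Y₁ := (h₀.mul h₁).mul h₀.inv
  have hY₂PL : IsPL0 Y₂ := (h₀2.mul h₁).mul h₀2.inv
  have hp₁PL : IsPL0 p₁ := (h₀.inv.mul h₁.inv).mul h₀2
  have hp₂PL : IsPL0 p₂ := ((h₀2.inv.mul h₁.inv).mul h₀2).mul h₀
  -- applications of f₀^2
  have hsqap : ∀ x : ℝ, (f₀ ^ 2) x = f₀ (f₀ x) := by
    intro x; rw [hsq]; simp [Equiv.Perm.mul_apply]
  -- fixed points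
  have hf₀a : f₀ a = a := horb₀.2.2.1
  have hf₁b : f₁ b = b := horb₁.2.2.1
  have hf₁d : f₁ d = d := horb₁.2.2.2
  have haSupp : f₁ a ≠ a := horb₁.2.1 ⟨hba, had⟩
  have hf₀2a : (f₀ ^ 2) a = a := by rw [hsqap, hf₀a, hf₀a]
  -- final contradiction helper : g a = a is impossible
  have hga : g a = f₁⁻¹ a := by
    show f₁⁻¹ (f₀ a) = f₁⁻¹ a
    rw [hf₀a]
  have hganot : g a ≠ a := by
    rw [hga]
    intro hc
    apply haSupp
    have := congrArg (⇑f₁) hc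
    have h2 : a = f₁ a := by simpa using this
    exact h2.symm
  -- the orbitals of the conjugates
  have hO₁ : IsOrbital Y₁ (f₀ b) (f₀ d) := orbital_conj f₀ f₁ m₀ horb₁
  have hO₂ : IsOrbital Y₂ ((f₀ ^ 2) b) ((f₀ ^ 2) d) := orbital_conj (f₀ ^ 2) f₁ h₀2.1 horb₁
  -- g fixes the endpoints of these orbitals
  have hgfix₁ := commuting_fixes_orbital Y₁ g hY₁PL hgPL.1 hcomm1 hO₁
  have hgfix₂ := commuting_fixes_orbital Y₂ g hY₂PL hgPL.1 hcomm2 hO₂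
  -- commutation pointwise for lemmaR
  have hcY₁ : ∀ x ∈ Ioo (f₀ b) (f₀ d), g (Y₁ x) = Y₁ (g x) := fun x _ => ptw g Y₁ hcomm1 x
  have hcY₂ : ∀ x ∈ Ioo ((f₀ ^ 2) b) ((f₀ ^ 2) d), g (Y₂ x) = Y₂ (g x) :=
    fun x _ => ptw g Y₂ hcomm2 x
  -- basic inequalities
  have hfb_lt_a : f₀ b < a := by rw [← hf₀a]; exact m₀ hba
  have hf2b_lt_a : (f₀ ^ 2) b < a := by
    rw [hsqap, ← hf₀a]; exact m₀ (by rw [← hf₀a] at hfb_lt_a ⊢; exact m₀ hba)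
  have ha_lt_fd : a < f₀ d := by rw [← hf₀a]; exact m₀ had
  have ha_lt_f2d : a < (f₀ ^ 2) d := by
    rw [hsqap, ← hf₀a]; exact m₀ ha_lt_fd
  by_cases hfd : f₀ d = d
  · by_cases hfb : f₀ b = b
    · -- Case 3 : both endpoints fixed by f₀
      have hf2b : (f₀ ^ 2) b = b := by rw [hsqap, hfb, hfb]
      have hf2d : (f₀ ^ 2) d = d := by rw [hsqap, hfd, hfd]
      have hbd : b < d := hba.trans had
      -- p₁, p₂ fix b and d
      have hp₁b : p₁ b = b := by
        show f₀⁻¹ (f₁⁻¹ ((f₀ ^ 2) b)) = b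
        rw [hf2b]
        have : f₁⁻¹ b = b := by
          have := congrArg (⇑f₁⁻¹) hf₁b; simpa using this.symm
        rw [this]
        have := congrArg (⇑f₀⁻¹) hfb; simpa using this.symm
      have hp₁d : p₁ d = d := by
        show f₀⁻¹ (f₁⁻¹ ((f₀ ^ 2) d)) = d
        rw [hf2d]
        have : f₁⁻¹ d = d := by
          have := congrArg (⇑f₁⁻¹) hf₁d; simpa using this.symm
        rw [this]
        have := congrArg (⇑f₀⁻¹) hfd; simpa using this.symm
      -- value of p₁ at a
      have hp₁a : p₁ a = f₀⁻¹ (f₁⁻¹ a) := by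
        show f₀⁻¹ (f₁⁻¹ ((f₀ ^ 2) a)) = f₀⁻¹ (f₁⁻¹ a)
        rw [hf₀2a]
      -- p₁ has no fixed point in (b,d)
      have hfpf₁ : ∀ x ∈ Ioo b d, p₁ x ≠ x := by
        intro x hx hc
        have hall := lemmaR f₁ p₁ m₁ hp₁PL hbd hf₁b hf₁d
          (fun y hy => horb₁.2.1 hy) (fun y _ => ptw p₁ f₁ hcp₁ y) hx hc
        have := hall a ⟨hba, had⟩
        rw [hp₁a] at this
        have h2 := congrArg (⇑f₀) this
        simp only [Equiv.Perm.apply_inv_self] at h2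
        rw [hf₀a] at h2
        have h3 := congrArg (⇑f₁) h2
        simp only [Equiv.Perm.apply_inv_self] at h3
        exact haSupp h3.symm
      -- slopes at d from the left
      obtain ⟨s₀, hs₀, G₀⟩ := hasLeftGerm_of_PL0 f₀ h₀ d hfd
      obtain ⟨s₁, hs₁, G₁⟩ := hasLeftGerm_of_PL0 f₁ h₁ d hf₁d
      have G₀i : HasLeftGerm (⇑f₀⁻¹) d s₀⁻¹ := G₀.perm_inv hs₀ hfd
      have G₁i : HasLeftGerm (⇑f₁⁻¹) d s₁⁻¹ := G₁.perm_inv hs₁ hf₁d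
      -- germ of p₁
      have c1 : HasLeftGerm (fun x => f₀ (f₀ x)) d (s₀ * s₀) := G₀.comp hs₀ G₀
      have c2 : HasLeftGerm (fun x => f₁⁻¹ (f₀ (f₀ x))) d (s₁⁻¹ * (s₀ * s₀)) :=
        G₁i.comp (by positivity) c1
      have c3 : HasLeftGerm (fun x => f₀⁻¹ (f₁⁻¹ (f₀ (f₀ x)))) d
          (s₀⁻¹ * (s₁⁻¹ * (s₀ * s₀))) := G₀i.comp (by positivity) c2
      have hp₁fun : ⇑p₁ = fun x => f₀⁻¹ (f₁⁻¹ (f₀ (f₀ x))) := by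
        funext x
        show f₀⁻¹ (f₁⁻¹ ((f₀ ^ 2) x)) = _
        rw [hsqap]
      have Gp₁ : HasLeftGerm (⇑p₁) d (s₀⁻¹ * (s₁⁻¹ * (s₀ * s₀))) := by
        rw [hp₁fun]; exact c3
      -- germ of p₂
      have d1 : HasLeftGerm (fun x => f₀ (f₀ (f₀ x))) d (s₀ * (s₀ * s₀)) :=
        G₀.comp (by positivity) c1
      have d2 : HasLeftGerm (fun x => f₁⁻¹ (f₀ (f₀ (f₀ x)))) d (s₁⁻¹ * (s₀ * (s₀ * s₀))) :=
        G₁i.comp (by positivity) d1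
      have d3 : HasLeftGerm (fun x => f₀⁻¹ (f₁⁻¹ (f₀ (f₀ (f₀ x))))) d
          (s₀⁻¹ * (s₁⁻¹ * (s₀ * (s₀ * s₀)))) := G₀i.comp (by positivity) d2
      have d4 : HasLeftGerm (fun x => f₀⁻¹ (f₀⁻¹ (f₁⁻¹ (f₀ (f₀ (f₀ x)))))) d
          (s₀⁻¹ * (s₀⁻¹ * (s₁⁻¹ * (s₀ * (s₀ * s₀))))) := G₀i.comp (by positivity) d3
      have hp₂fun : ⇑p₂ = fun x => f₀⁻¹ (f₀⁻¹ (f₁⁻¹ (f₀ (f₀ (f₀ x))))) := by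
        funext x
        show (f₀ ^ 2)⁻¹ (f₁⁻¹ ((f₀ ^ 2) (f₀ x))) = _
        rw [hsqap]
        have : (f₀ ^ 2)⁻¹ = f₀⁻¹ * f₀⁻¹ := by rw [hsq, mul_inv_rev]
        rw [this]
        rfl
      have Gp₂ : HasLeftGerm (⇑p₂) d (s₀⁻¹ * (s₀⁻¹ * (s₁⁻¹ * (s₀ * (s₀ * s₀))))) := by
        rw [hp₂fun]; exact d4
      -- p₁ d = d so we may invert its germ
      have Gp₁i : HasLeftGerm (⇑p₁⁻¹) d (s₀⁻¹ * (s₁⁻¹ * (s₀ * s₀)))⁻¹ :=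
        Gp₁.perm_inv (by positivity) hp₁d
      set φ : Equiv.Perm ℝ := p₁⁻¹ * p₂ with hφdef
      have hφfun : ⇑φ = fun x => p₁⁻¹ (p₂ x) := by
        funext x; simp [hφdef, Equiv.Perm.mul_apply]
      have Gφ' : HasLeftGerm (⇑φ) d
          ((s₀⁻¹ * (s₁⁻¹ * (s₀ * s₀)))⁻¹ * (s₀⁻¹ * (s₀⁻¹ * (s₁⁻¹ * (s₀ * (s₀ * s₀)))))) := by
        rw [hφfun]; exact Gp₁i.comp (by positivity) Gp₂
      have Gφ : HasLeftGerm (⇑φ) d 1 := by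
        apply Gφ'.congr_slope
        field_simp
      -- φ is the identity near d on the left
      obtain ⟨δ, hδ, hφid⟩ := Gφ
      have hφid' : ∀ x ∈ Ioo (d - δ) d, φ x = x := by
        intro x hx
        have := hφid x hx
        rw [this]; ring
      -- φ commutes with f₁
      have hCp₁ : Commute p₁ f₁ := hcp₁
      have hCp₂ : Commute p₂ f₁ := hcp₂
      have hCφ : Commute φ f₁ := by
        rw [hφdef]
        exact Commute.mul_left hCp₁.inv_left hCp₂
      have hcφ : φ * f₁ = f₁ * φ := hCφ
      -- a point of (b,d) fixed by φ
      obtain ⟨q, hq⟩ := nonempty_Ioo.mpr (max_lt hbd (by linarith : d - δ < d))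
      have hqbd : q ∈ Ioo b d := ⟨(le_max_left _ _).trans_lt hq.1, hq.2⟩
      have hqδ : q ∈ Ioo (d - δ) d := ⟨(le_max_right _ _).trans_lt hq.1, hq.2⟩
      -- φ is the identity on all of (b,d)
      have hφPL : IsPL0 φ := hp₁PL.inv.mul hp₂PL
      have hφall : ∀ x ∈ Ioo b d, φ x = x :=
        lemmaR f₁ φ m₁ hφPL hbd hf₁b hf₁d (fun y hy => horb₁.2.1 hy)
          (fun y _ => ptw φ f₁ hcφ y) hqbd (hφid' q hqδ)
      -- hence p₂ = p₁ on (b,d), i.e. f₀ commutes with p₁ on (b,d)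
      have hp₂p₁ : ∀ x ∈ Ioo b d, p₂ x = p₁ x := by
        intro x hx
        have := hφall x hx
        rw [hφfun] at this
        simp only at this
        have := congrArg (⇑p₁) this
        simpa using this
      have hp₂eq : p₂ = f₀⁻¹ * p₁ * f₀ := by
        rw [hp₂def, hp₁def]; group
      have hf₀mem : ∀ x ∈ Ioo b d, f₀ x ∈ Ioo b d := by
        intro x hx
        exact ⟨by rw [← hfb]; exact m₀ hx.1, by rw [← hfd]; exact m₀ hx.2⟩
      have hcomm₀ : ∀ x ∈ Ioo b d, f₀ (p₁ x) = p₁ (f₀ x) := by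
        intro x hx
        have h1 := hp₂p₁ x hx
        rw [hp₂eq] at h1
        have h2 : f₀⁻¹ (p₁ (f₀ x)) = p₁ x := by
          have : (f₀⁻¹ * p₁ * f₀) x = f₀⁻¹ (p₁ (f₀ x)) := by
            simp [Equiv.Perm.mul_apply]
          rw [← this, h1]
        have := congrArg (⇑f₀) h2
        simpa using this.symm
      -- final application of the rigidity lemma : f₀ is the identity on (b,d)
      have hfinal : ∀ x ∈ Ioo b d, f₀ x = x :=
        lemmaR p₁ f₀ hp₁PL.1 h₀ hbd hp₁b hp₁d hfpf₁ hcomm₀ ⟨hba, had⟩ hf₀a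
      -- contradiction with the orbital (a,c) of f₀
      obtain ⟨x, hx⟩ := nonempty_Ioo.mpr (lt_min horb₀.1 had)
      have hx1 : x ∈ Ioo a c := ⟨hx.1, hx.2.trans_le (min_le_left _ _)⟩
      have hx2 : x ∈ Ioo b d := ⟨hba.trans hx.1, hx.2.trans_le (min_le_right _ _)⟩
      exact horb₀.2.1 hx1 (hfinal x hx2)
    · -- Case 2 : f₀ d = d but f₀ b ≠ b
      have hf2d : (f₀ ^ 2) d = d := by rw [hsqap, hfd, hfd]
      rcases lt_or_gt_of_ne hfb with hlt | hgt
      · -- f₀ b < b : the point f₀ b lies inside the Y₂-orbital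
        have hp : f₀ b ∈ Ioo ((f₀ ^ 2) b) ((f₀ ^ 2) d) := by
          constructor
          · rw [hsqap]; exact m₀ hlt
          · rw [hf2d]; exact hfb_lt_a.trans (had)
        have hgall := lemmaR Y₂ g hY₂PL.1 hgPL hO₂.1 hO₂.2.2.1 hO₂.2.2.2
          (fun y hy => hO₂.2.1 hy) hcY₂ hp hgfix₁.1
        exact hganot (hgall a ⟨hf2b_lt_a, by rw [hf2d]; exact had⟩)
      · -- b < f₀ b : the point (f₀^2) b lies inside the Y₁-orbital
        have hp : (f₀ ^ 2) b ∈ Ioo (f₀ b) (f₀ d) := by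
          constructor
          · rw [hsqap]; exact m₀ hgt
          · exact hf2b_lt_a.trans ha_lt_fd
        have hgall := lemmaR Y₁ g hY₁PL.1 hgPL hO₁.1 hO₁.2.2.1 hO₁.2.2.2
          (fun y hy => hO₁.2.1 hy) hcY₁ hp hgfix₂.1
        exact hganot (hgall a ⟨hfb_lt_a, ha_lt_fd⟩)
  · -- Case 1 : f₀ d ≠ d
    rcases lt_or_gt_of_ne hfd with hlt | hgt
    · -- f₀ d < d : the point (f₀^2) d lies inside the Y₁-orbital
      have hp : (f₀ ^ 2) d ∈ Ioo (f₀ b) (f₀ d) := by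
        constructor
        · exact hfb_lt_a.trans ha_lt_f2d
        · rw [hsqap]; exact m₀ hlt
      have hgall := lemmaR Y₁ g hY₁PL.1 hgPL hO₁.1 hO₁.2.2.1 hO₁.2.2.2
        (fun y hy => hO₁.2.1 hy) hcY₁ hp hgfix₂.2
      exact hganot (hgall a ⟨hfb_lt_a, ha_lt_fd⟩)
    · -- d < f₀ d : the point f₀ d lies inside the Y₂-orbital
      have hp : f₀ d ∈ Ioo ((f₀ ^ 2) b) ((f₀ ^ 2) d) := by
        constructor
        · exact hf2b_lt_a.trans ha_lt_fd
        · rw [hsqap]; exact m₀ hgt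
      have hgall := lemmaR Y₂ g hY₂PL.1 hgPL hO₂.1 hO₂.2.2.1 hO₂.2.2.2
        (fun y hy => hO₂.2.1 hy) hcY₂ hp hgfix₁.2
      exact hganot (hgall a ⟨hf2b_lt_a, ha_lt_f2d⟩)

-- ## Reflection x ↦ 1 - x

noncomputable def reflPerm : Equiv.Perm ℝ :=
  Function.Involutive.toPerm (fun x => 1 - x) (fun x => by ring)

lemma reflPerm_apply (x : ℝ) : reflPerm x = 1 - x := rfl

lemma reflPerm_inv_apply (x : ℝ) : reflPerm⁻¹ x = 1 - x := rfl

lemma refl_PL0 {f : Equiv.Perm ℝ} (hf : IsPL0 f) : IsPL0 (reflPerm * f * reflPerm⁻¹) := by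
  classical
  have happ : ∀ x : ℝ, (reflPerm * f * reflPerm⁻¹) x = 1 - f (1 - x) := by
    intro x
    show reflPerm (f (reflPerm⁻¹ x)) = _
    rw [reflPerm_inv_apply, reflPerm_apply]
  refine ⟨?_, ?_, ?_, ?_⟩
  · intro x y hxy
    rw [happ, happ]
    have : f (1 - y) < f (1 - x) := hf.1 (by linarith)
    linarith
  · intro x hx
    rw [happ, hf.2.2.1 (1 - x) (by linarith)]
    ring
  · intro x hx
    rw [happ, hf.2.1 (1 - x) (by linarith)]
    ring
  · obtain ⟨B, hB⟩ := hf.2.2.2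
    refine ⟨B.image (fun y => 1 - y), ?_⟩
    intro x hx
    have hx' : (1 : ℝ) - x ∉ B := by
      intro hc
      apply hx
      simp only [Finset.mem_image]
      exact ⟨1 - x, hc, by ring⟩
    obtain ⟨s, t, hst⟩ := hB (1 - x) hx'
    refine ⟨s, 1 - s - t, ?_⟩
    have htends : Filter.Tendsto (fun y : ℝ => 1 - y) (nhds x) (nhds (1 - x)) := by
      have : Continuous (fun y : ℝ => 1 - y) := by continuity
      exact this.tendsto x
    filter_upwards [htends.eventually hst] with y hy
    rw [happ, hy]
    ring

lemma refl_orbital {f : Equiv.Perm ℝ} {b d : ℝ} (h : IsOrbital f b d) :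
    IsOrbital (reflPerm * f * reflPerm⁻¹) (1 - d) (1 - b) := by
  have happ : ∀ x : ℝ, (reflPerm * f * reflPerm⁻¹) x = 1 - f (1 - x) := by
    intro x
    show reflPerm (f (reflPerm⁻¹ x)) = _
    rw [reflPerm_inv_apply, reflPerm_apply]
  refine ⟨by linarith [h.1], ?_, ?_, ?_⟩
  · intro x hx
    have hmem : (1 : ℝ) - x ∈ Ioo b d := ⟨by linarith [hx.2], by linarith [hx.1]⟩
    have := h.2.1 hmem
    rw [Supp, mem_setOf_eq] at this ⊢
    rw [happ]
    intro hc
    exact this (by linarith)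
  · rw [happ]
    have : (1:ℝ) - (1 - d) = d := by ring
    rw [this, h.2.2.2]
  · rw [happ]
    have : (1:ℝ) - (1 - b) = b := by ring
    rw [this, h.2.2.1]

lemma refl_rel {f₀ f₁ : Equiv.Perm ℝ} (h : ThompsonRel f₀ f₁) :
    ThompsonRel (reflPerm * f₀ * reflPerm⁻¹) (reflPerm * f₁ * reflPerm⁻¹) := by
  constructor
  · have e : ⁅(reflPerm * f₁ * reflPerm⁻¹)⁻¹ * (reflPerm * f₀ * reflPerm⁻¹),
        (reflPerm * f₀ * reflPerm⁻¹) * (reflPerm * f₁ * reflPerm⁻¹) *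
          (reflPerm * f₀ * reflPerm⁻¹)⁻¹⁆ =
        reflPerm * ⁅f₁⁻¹ * f₀, f₀ * f₁ * f₀⁻¹⁆ * reflPerm⁻¹ := by
      simp only [commutatorElement_def]
      group
    rw [e, h.1]
    group
  · have e : ⁅(reflPerm * f₁ * reflPerm⁻¹)⁻¹ * (reflPerm * f₀ * reflPerm⁻¹),
        (reflPerm * f₀ * reflPerm⁻¹) ^ 2 * (reflPerm * f₁ * reflPerm⁻¹) *
          ((reflPerm * f₀ * reflPerm⁻¹) ^ 2)⁻¹⁆ =
        reflPerm * ⁅f₁⁻¹ * f₀, f₀ ^ 2 * f₁ * (f₀ ^ 2)⁻¹⁆ * reflPerm⁻¹ := by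
      simp only [commutatorElement_def, sq]
      group
    rw [e, h.2]
    group

lemma badconfig_right (f₀ f₁ : Equiv.Perm ℝ) (h₀ : IsPL0 f₀) (h₁ : IsPL0 f₁)
    (hrel : ThompsonRel f₀ f₁) (a c b d : ℝ)
    (horb₀ : IsOrbital f₀ a c) (horb₁ : IsOrbital f₁ b d)
    (hbc : b < c) (hcd : c < d) : False := by
  exact badconfig (reflPerm * f₀ * reflPerm⁻¹) (reflPerm * f₁ * reflPerm⁻¹)
    (refl_PL0 h₀) (refl_PL0 h₁) (refl_rel hrel) (1 - c) (1 - a) (1 - d) (1 - b)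
    (refl_orbital horb₀) (refl_orbital horb₁) (by linarith) (by linarith)

-- ## The main theorem


/-- If `f₀, f₁ ∈ PL₀(I)` satisfy the two standard relations of Thompson's group `F`
and `A` is an orbital of `f₀`, then either `A` contains some orbital of `f₁`, or `A`
is disjoint from the support of `f₁`.  In particular no orbital of `f₀` is properly
contained in an orbital of `f₁`. -/
theorem orbital_contains_or_disjoint (f₀ f₁ : Equiv.Perm ℝ)
    (h₀ : IsPL0 f₀) (h₁ : IsPL0 f₁) (hrel : ThompsonRel f₀ f₁) (a c : ℝ)
    (horb₀ : IsOrbital f₀ a c) :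
    ((∃ b d : ℝ, IsOrbital f₁ b d ∧ Set.Ioo b d ⊆ Set.Ioo a c) ∨
      Disjoint (Set.Ioo a c) (Supp f₁)) ∧
    ∀ b d : ℝ, IsOrbital f₁ b d → ¬ Set.Ioo a c ⊂ Set.Ioo b d := by
  constructor
  · by_cases hdisj : Disjoint (Set.Ioo a c) (Supp f₁)
    · exact Or.inr hdisj
    · left
      rw [Set.not_disjoint_iff] at hdisj
      obtain ⟨x, hxac, hxsupp⟩ := hdisj
      obtain ⟨b, d, horb₁, hxbd⟩ := orbital_exists f₁ h₁ x hxsupp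
      refine ⟨b, d, horb₁, ?_⟩
      by_cases hab : a ≤ b
      · by_cases hdc : d ≤ c
        · exact Set.Ioo_subset_Ioo hab hdc
        · push_neg at hdc
          exact absurd (badconfig_right f₀ f₁ h₀ h₁ hrel a c b d horb₀ horb₁
            (hxbd.1.trans hxac.2) hdc) not_false
      · push_neg at hab
        exact absurd (badconfig f₀ f₁ h₀ h₁ hrel a c b d horb₀ horb₁ hab
          (hxac.1.trans hxbd.2)) not_false
  · intro b d horb₁ hss
    have hsub := hss.1
    have hba : b ≤ a ∧ c ≤ d := by
      rw [← Set.Ioo_subset_Ioo_iff horb₀.1]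
      exact hsub
    have hne : ¬(b = a ∧ d = c) := by
      rintro ⟨rfl, rfl⟩
      exact hss.2 (le_refl _)
    rcases eq_or_lt_of_le hba.1 with h1 | h1
    · rcases eq_or_lt_of_le hba.2 with h2 | h2
      · exact hne ⟨h1, h2.symm⟩
      · exact badconfig_right f₀ f₁ h₀ h₁ hrel a c b d horb₀ horb₁
          (h1 ▸ horb₀.1 : b < c) h2
    · exact badconfig f₀ f₁ h₀ h₁ hrel a c b d horb₀ horb₁ h1
        (lt_of_lt_of_le horb₀.1 hba.2)
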